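/- Let γ be an n×n complex matrix and let θ₁, θ₂ be complex matrices of sizes n×m₁ and n×m₂ such that the pair (γ, θ₁) is controllable and the pair (γ*, θ₂) is controllable (i.e., the realization φ(z) = iθ₂*(zI_n − γ)⁻¹θ₁ is minimal). Suppose X is an n×n Hermitian positive definite matrix satisfying the algebraic Riccati equation γX − Xγ* − iXθ₂θ₂*X + iθ₁θ₁* = 0. Define ϑ₁ = X^{−1/2}θ₁, ϑ₂ = X^{1/2}θ₂, and α = X^{−1/2}γX^{1/2} + iϑ₁ϑ₁*, where X^{1/2} is the positive definite square root of X. Then the quadruple Σ = {α, I_n, ϑ₁, ϑ₂} is admissible, both pairs (α, ϑ₁) and (α, ϑ₂) are controllable, and for every z that is not an eigenvalue of γ one has iϑ₂*(zI_n − β₁)⁻¹ϑ₁ = iθ₂*(zI_n − γ)⁻¹θ₁, where β₁ = α − iϑ₁ϑ₁* (so that φ coincides with the function φ_{1,Σ} associated with Σ). -/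
import Mathlib


open Matrix
open scoped ComplexOrder

/-- A quadruple `{α, S₀, ϑ₁, ϑ₂}` is admissible if `S₀` is Hermitian positive definite and
`αS₀ − S₀α* = i(ϑ₁ϑ₁* + ϑ₂ϑ₂*)`. -/
def Admissible {n m₁ m₂ : ℕ} (α S₀ : Matrix (Fin n) (Fin n) ℂ)
    (θ₁ : Matrix (Fin n) (Fin m₁) ℂ) (θ₂ : Matrix (Fin n) (Fin m₂) ℂ) : Prop :=
  S₀.PosDef ∧ α * S₀ - S₀ * αᴴ = Complex.I • (θ₁ * θ₁ᴴ + θ₂ * θ₂ᴴ)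

/-- A pair `(A, B)` is controllable if the columns of `B, AB, …, A^{n−1}B` span `ℂⁿ`. -/
def Controllable {n p : ℕ} (A : Matrix (Fin n) (Fin n) ℂ) (B : Matrix (Fin n) (Fin p) ℂ) :
    Prop :=
  Submodule.span ℂ
    {v : Fin n → ℂ | ∃ k : ℕ, k < n ∧ ∃ j : Fin p, v = fun i => (A ^ k * B) i j} = ⊤


open Matrix
open scoped ComplexOrder

section Aux
variable {n p q : ℕ}

/-- span of columns of A^k B for all k -/
noncomputable def spanAll (A : Matrix (Fin n) (Fin n) ℂ) (B : Matrix (Fin n) (Fin p) ℂ) :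
    Submodule ℂ (Fin n → ℂ) :=
  Submodule.span ℂ {v : Fin n → ℂ | ∃ k : ℕ, ∃ j : Fin p, v = fun i => (A ^ k * B) i j}

lemma col_mem_spanAll (A : Matrix (Fin n) (Fin n) ℂ) (B : Matrix (Fin n) (Fin p) ℂ)
    (k : ℕ) (j : Fin p) : (fun i => (A ^ k * B) i j) ∈ spanAll A B :=
  Submodule.subset_span ⟨k, j, rfl⟩

lemma mulVec_col (A : Matrix (Fin n) (Fin n) ℂ) (M : Matrix (Fin n) (Fin p) ℂ) (j : Fin p) :
    (A *ᵥ fun i => M i j) = fun i => (A * M) i j := by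
  funext i; simp [Matrix.mulVec, Matrix.mul_apply, dotProduct]

lemma spanAll_mulVec_mem (A : Matrix (Fin n) (Fin n) ℂ) (B : Matrix (Fin n) (Fin p) ℂ)
    {v : Fin n → ℂ} (hv : v ∈ spanAll A B) : A *ᵥ v ∈ spanAll A B := by
  induction hv using Submodule.span_induction with
  | mem x hx =>
    obtain ⟨k, j, rfl⟩ := hx
    rw [mulVec_col, ← Matrix.mul_assoc, ← pow_succ']
    exact col_mem_spanAll A B (k+1) j
  | zero => simp [Submodule.zero_mem]
  | add x y _ _ hx hy => rw [Matrix.mulVec_add]; exact Submodule.add_mem _ hx hy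
  | smul c x _ hx => rw [Matrix.mulVec_smul]; exact Submodule.smul_mem _ _ hx

lemma col_mul_mem (A : Matrix (Fin n) (Fin n) ℂ) (B : Matrix (Fin n) (Fin p) ℂ)
    (N : Matrix (Fin p) (Fin q) ℂ) (j : Fin q) :
    (fun i => (B * N) i j) ∈ spanAll A B := by
  have h : (fun i => (B * N) i j) = ∑ l : Fin p, N l j • (fun i => B i l) := by
    funext i
    simp [Matrix.mul_apply, Finset.sum_apply, mul_comm]
  rw [h]
  refine Submodule.sum_mem _ fun l _ => Submodule.smul_mem _ _ ?_
  simpa using col_mem_spanAll A B 0 l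

lemma spanAll_add_le (A : Matrix (Fin n) (Fin n) ℂ) (B : Matrix (Fin n) (Fin p) ℂ)
    (K : Matrix (Fin p) (Fin n) ℂ) : spanAll (A + B * K) B ≤ spanAll A B := by
  refine Submodule.span_le.2 ?_
  rintro v ⟨k, j, rfl⟩
  induction k generalizing j with
  | zero => simpa using col_mem_spanAll A B 0 j
  | succ k ih =>
    have hM : (A + B * K) ^ (k+1) * B
        = A * ((A + B * K) ^ k * B) + B * (K * ((A + B * K) ^ k * B)) := by
      rw [pow_succ', Matrix.mul_assoc, Matrix.add_mul, Matrix.mul_assoc]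
    have hcol : (fun i => ((A + B * K) ^ (k+1) * B) i j)
        = (fun i => (A * ((A + B * K) ^ k * B)) i j)
          + fun i => (B * (K * ((A + B * K) ^ k * B))) i j := by
      funext i; rw [hM]; simp [Matrix.add_apply]
    rw [hcol]
    refine Submodule.add_mem _ ?_ (col_mul_mem A B _ j)
    rw [← mulVec_col]
    exact spanAll_mulVec_mem A B (ih j)

lemma spanAll_add_eq (A : Matrix (Fin n) (Fin n) ℂ) (B : Matrix (Fin n) (Fin p) ℂ)
    (K : Matrix (Fin p) (Fin n) ℂ) : spanAll (A + B * K) B = spanAll A B := by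
  refine le_antisymm (spanAll_add_le A B K) ?_
  have h := spanAll_add_le (A + B * K) B (-K)
  rwa [Matrix.mul_neg, add_neg_cancel_right] at h

lemma pow_col_mem (A : Matrix (Fin n) (Fin n) ℂ) (B : Matrix (Fin n) (Fin p) ℂ)
    (hn : 0 < n) (k : ℕ) :
    ∀ j : Fin p, (fun i => (A ^ k * B) i j) ∈
      Submodule.span ℂ
        {v : Fin n → ℂ | ∃ k : ℕ, k < n ∧ ∃ j : Fin p, v = fun i => (A ^ k * B) i j} := by
  induction k using Nat.strong_induction_on with
  | _ k ih =>
    intro j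
    by_cases hk : k < n
    · exact Submodule.subset_span ⟨k, hk, j, rfl⟩
    · push_neg at hk
      have hdeg : A.charpoly.natDegree = n := by
        simpa using A.charpoly_natDegree_eq_dim
      have hcn : A.charpoly.coeff n = 1 := by
        have h := A.charpoly_monic.coeff_natDegree
        rwa [hdeg] at h
      have h0 : ∑ i ∈ Finset.range n, A.charpoly.coeff i • A ^ i + A ^ n = 0 := by
        have h := A.aeval_self_charpoly
        rwa [Polynomial.aeval_eq_sum_range, hdeg, Finset.sum_range_succ, hcn, one_smul] at h
      have hAn : A ^ n = ∑ i ∈ Finset.range n, (-(A.charpoly.coeff i)) • A ^ i := by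
        have h := eq_neg_of_add_eq_zero_right h0
        rw [h, ← Finset.sum_neg_distrib]
        simp [neg_smul]
      have hmul : A ^ k * B
          = ∑ i ∈ Finset.range n, (-(A.charpoly.coeff i)) • (A ^ (k - n + i) * B) := by
        calc A ^ k * B = A ^ (k - n) * A ^ n * B := by
              rw [← pow_add, Nat.sub_add_cancel hk]
          _ = _ := by
              rw [hAn]
              simp only [Matrix.mul_sum, Matrix.sum_mul]
              refine Finset.sum_congr rfl fun i _ => ?_
              rw [Matrix.mul_smul, Matrix.smul_mul, pow_add, Matrix.mul_assoc]
      have hcol : (fun i => (A ^ k * B) i j)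
          = ∑ i ∈ Finset.range n,
              (-(A.charpoly.coeff i)) • fun x => (A ^ (k - n + i) * B) x j := by
        funext x
        rw [hmul]
        simp [Matrix.sum_apply, Finset.sum_apply]
      rw [hcol]
      refine Submodule.sum_mem _ fun i hi => Submodule.smul_mem _ _ ?_
      have hlt : k - n + i < k := by
        have := Finset.mem_range.1 hi; omega
      exact ih _ hlt j

lemma controllable_iff_spanAll (A : Matrix (Fin n) (Fin n) ℂ) (B : Matrix (Fin n) (Fin p) ℂ) :
    Controllable A B ↔ spanAll A B = ⊤ := by
  constructor
  · intro h
    refine le_antisymm le_top ?_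
    rw [← h]
    exact Submodule.span_mono (by rintro v ⟨k, _, j, rfl⟩; exact ⟨k, j, rfl⟩)
  · intro h
    rcases Nat.eq_zero_or_pos n with h0 | hn
    · subst h0
      refine Submodule.eq_top_iff'.2 fun v => ?_
      have : v = 0 := funext fun i => i.elim0
      rw [this]; exact Submodule.zero_mem _
    · refine le_antisymm le_top ?_
      rw [← h]
      refine Submodule.span_le.2 ?_
      rintro v ⟨k, j, rfl⟩
      exact pow_col_mem A B hn k j

lemma controllable_feedback (A : Matrix (Fin n) (Fin n) ℂ) (B : Matrix (Fin n) (Fin p) ℂ)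
    (K : Matrix (Fin p) (Fin n) ℂ) (h : Controllable A B) : Controllable (A + B * K) B := by
  rw [controllable_iff_spanAll] at h ⊢
  rwa [spanAll_add_eq]

lemma controllable_conj {A : Matrix (Fin n) (Fin n) ℂ} {B : Matrix (Fin n) (Fin p) ℂ}
    (T : Matrix (Fin n) (Fin n) ℂ) (hT : IsUnit T.det) (h : Controllable A B) :
    Controllable (T⁻¹ * A * T) (T⁻¹ * B) := by
  have hTT : T * T⁻¹ = 1 := Matrix.mul_nonsing_inv T hT
  have hTT' : T⁻¹ * T = 1 := Matrix.nonsing_inv_mul T hT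
  have hpow : ∀ k : ℕ, (T⁻¹ * A * T) ^ k * (T⁻¹ * B) = T⁻¹ * (A ^ k * B) := by
    intro k; induction k with
    | zero => simp [Matrix.mul_assoc]
    | succ k ih =>
      rw [pow_succ', Matrix.mul_assoc, ih, pow_succ']
      have c : ∀ (M : Matrix (Fin n) (Fin p) ℂ), T * (T⁻¹ * M) = M := fun M => by
        rw [← Matrix.mul_assoc, hTT, Matrix.one_mul]
      simp only [Matrix.mul_assoc, c]
  unfold Controllable at h ⊢
  have hset : {v : Fin n → ℂ | ∃ k : ℕ, k < n ∧ ∃ j : Fin p,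
        v = fun i => ((T⁻¹ * A * T) ^ k * (T⁻¹ * B)) i j}
      = (Matrix.mulVecLin T⁻¹) ''
        {v : Fin n → ℂ | ∃ k : ℕ, k < n ∧ ∃ j : Fin p, v = fun i => (A ^ k * B) i j} := by
    ext v
    constructor
    · rintro ⟨k, hk, j, rfl⟩
      exact ⟨fun i => (A ^ k * B) i j, ⟨k, hk, j, rfl⟩, by
        simp only [Matrix.mulVecLin_apply, mulVec_col, hpow]⟩
    · rintro ⟨w, ⟨k, hk, j, rfl⟩, rfl⟩
      exact ⟨k, hk, j, by simp only [Matrix.mulVecLin_apply, mulVec_col, hpow]⟩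
  rw [hset, Submodule.span_image, h, Submodule.map_top, LinearMap.range_eq_top]
  intro w
  exact ⟨T *ᵥ w, by simp [Matrix.mulVec_mulVec, hTT']⟩

end Aux

/-- solution of the inverse problem. Given a minimal realization
`φ(z) = iθ₂*(zI − γ)⁻¹θ₁` and the positive definite solution `X` of the Riccati equation
`γX − Xγ* − iXθ₂θ₂*X + iθ₁θ₁* = 0`, the quadruple `Σ = {α, I_n, ϑ₁, ϑ₂}` with
`ϑ₁ = X^{−1/2}θ₁`, `ϑ₂ = X^{1/2}θ₂`, `α = X^{−1/2}γX^{1/2} + iϑ₁ϑ₁*` is admissible,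
`(α, ϑ₁)` and `(α, ϑ₂)` are controllable, and `φ = φ_{1,Σ}`. -/
theorem inverse_problem_construction
    {n m₁ m₂ : ℕ} (γ : Matrix (Fin n) (Fin n) ℂ)
    (θ₁ : Matrix (Fin n) (Fin m₁) ℂ) (θ₂ : Matrix (Fin n) (Fin m₂) ℂ)
    (hc : Controllable γ θ₁) (ho : Controllable γᴴ θ₂)
    (X : Matrix (Fin n) (Fin n) ℂ) (hX : X.PosDef)
    (hRic : γ * X - X * γᴴ - Complex.I • (X * (θ₂ * θ₂ᴴ) * X)
      + Complex.I • (θ₁ * θ₁ᴴ) = 0)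
    (Xh : Matrix (Fin n) (Fin n) ℂ)
    (hXh : Xh.PosDef ∧ Xh * Xh = X)  -- the positive definite square root of X
    (ϑ₁ : Matrix (Fin n) (Fin m₁) ℂ) (hϑ₁ : ϑ₁ = Xh⁻¹ * θ₁)
    (ϑ₂ : Matrix (Fin n) (Fin m₂) ℂ) (hϑ₂ : ϑ₂ = Xh * θ₂)
    (α : Matrix (Fin n) (Fin n) ℂ)
    (hα : α = Xh⁻¹ * γ * Xh + Complex.I • (ϑ₁ * ϑ₁ᴴ))
    (β₁ : Matrix (Fin n) (Fin n) ℂ) (hβ₁ : β₁ = α - Complex.I • (ϑ₁ * ϑ₁ᴴ)) :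
    Admissible α (1 : Matrix (Fin n) (Fin n) ℂ) ϑ₁ ϑ₂ ∧
    Controllable α ϑ₁ ∧ Controllable α ϑ₂ ∧
    ∀ z : ℂ, z ∉ spectrum ℂ γ →
      Complex.I • (ϑ₂ᴴ * (z • 1 - β₁)⁻¹ * ϑ₁) =
        Complex.I • (θ₂ᴴ * (z • 1 - γ)⁻¹ * θ₁) := by
  obtain ⟨hXhpd, hXsq⟩ := hXh
  subst hβ₁ hα hϑ₁ hϑ₂
  have hH : Xhᴴ = Xh := hXhpd.isHermitian
  have hdet : IsUnit Xh.det := hXhpd.det_pos.ne'.isUnit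
  have hTT : Xh * Xh⁻¹ = 1 := Matrix.mul_nonsing_inv Xh hdet
  have hTT' : Xh⁻¹ * Xh = 1 := Matrix.nonsing_inv_mul Xh hdet
  have hHinv : (Xh⁻¹)ᴴ = Xh⁻¹ := by rw [Matrix.conjTranspose_nonsing_inv, hH]
  have c1 : ∀ (q : ℕ) (M : Matrix (Fin n) (Fin q) ℂ), Xh * (Xh⁻¹ * M) = M := fun q M => by
    rw [← Matrix.mul_assoc, hTT, Matrix.one_mul]
  have c2 : ∀ (q : ℕ) (M : Matrix (Fin n) (Fin q) ℂ), Xh⁻¹ * (Xh * M) = M := fun q M => by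
    rw [← Matrix.mul_assoc, hTT', Matrix.one_mul]
  have h2 : Xh⁻¹ * (γ * X - X * γᴴ - Complex.I • (X * (θ₂ * θ₂ᴴ) * X)
      + Complex.I • (θ₁ * θ₁ᴴ)) * Xh⁻¹ = 0 := by
    rw [hRic, Matrix.mul_zero, Matrix.zero_mul]
  rw [← hXsq] at h2
  simp only [Matrix.mul_sub, Matrix.sub_mul, Matrix.mul_add, Matrix.add_mul,
    Matrix.mul_smul, Matrix.smul_mul, Matrix.mul_assoc, c1, c2, hTT, hTT',
    Matrix.mul_one, Matrix.one_mul] at h2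
  -- h2 : Xh⁻¹ * (γ * Xh) - Xh * (γᴴ * Xh⁻¹) - I•(Xh * (θ₂ * (θ₂ᴴ * Xh)))
  --      + I•(Xh⁻¹ * (θ₁ * (θ₁ᴴ * Xh⁻¹))) = 0
  have keyα : Xh⁻¹ * γ * Xh + Complex.I • ((Xh⁻¹ * θ₁) * (Xh⁻¹ * θ₁)ᴴ)
      = Xh * γᴴ * Xh⁻¹ + Complex.I • ((Xh * θ₂) * (Xh * θ₂)ᴴ) := by
    simp only [Matrix.conjTranspose_mul, hH, hHinv, Matrix.mul_assoc]
    rw [← sub_eq_zero]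
    abel_nf
    abel_nf at h2
    convert h2 using 2 <;> abel
  refine ⟨⟨Matrix.PosDef.one, ?_⟩, ?_, ?_, ?_⟩
  · -- admissibility
    rw [Matrix.mul_one, Matrix.one_mul]
    have hαH : (Xh⁻¹ * γ * Xh + Complex.I • ((Xh⁻¹ * θ₁) * (Xh⁻¹ * θ₁)ᴴ))ᴴ
        = Xh * γᴴ * Xh⁻¹ - Complex.I • ((Xh⁻¹ * θ₁) * (Xh⁻¹ * θ₁)ᴴ) := by
      simp [Matrix.conjTranspose_add, Matrix.conjTranspose_smul, Matrix.conjTranspose_mul,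
        hH, hHinv, Complex.conj_I, Matrix.mul_assoc, sub_eq_add_neg, neg_smul]
    have hα' : Xh⁻¹ * γ * Xh = Xh * γᴴ * Xh⁻¹
        + Complex.I • ((Xh * θ₂) * (Xh * θ₂)ᴴ)
        - Complex.I • ((Xh⁻¹ * θ₁) * (Xh⁻¹ * θ₁)ᴴ) := by
      rw [← keyα]; abel
    rw [hαH, hα', smul_add]
    abel
  · -- Controllable α ϑ₁
    rw [← Matrix.mul_smul]
    exact controllable_feedback _ _ _ (controllable_conj Xh hdet hc)
  · -- Controllable α ϑ₂
    rw [keyα, ← Matrix.mul_smul]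
    have hC2 : Controllable ((Xh⁻¹)⁻¹ * γᴴ * Xh⁻¹) ((Xh⁻¹)⁻¹ * θ₂) :=
      controllable_conj Xh⁻¹ (Matrix.isUnit_nonsing_inv_det Xh hdet) ho
    rw [Matrix.nonsing_inv_nonsing_inv Xh hdet] at hC2
    exact controllable_feedback _ _ _ hC2
  · -- transfer function
    intro z _
    rw [add_sub_cancel_right]
    have hsim : z • (1 : Matrix (Fin n) (Fin n) ℂ) - Xh⁻¹ * γ * Xh
        = Xh⁻¹ * (z • 1 - γ) * Xh := by
      rw [Matrix.mul_sub, Matrix.sub_mul]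
      congr 1
      rw [Matrix.mul_smul, Matrix.mul_one, Matrix.smul_mul, hTT']
    rw [hsim, Matrix.mul_inv_rev, Matrix.mul_inv_rev,
      Matrix.nonsing_inv_nonsing_inv Xh hdet]
    congr 1
    simp only [Matrix.conjTranspose_mul, hH, Matrix.mul_assoc, c1, c2]
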